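/- In the algebra ℂ_{a,0;q}[x,y] with relations yx = [(1-aq³)/(1-aq)]q^{-1}·xy, xa = qax, ya = q²ay, the (a;q)-binomial theorem holds: (x+y)^n = Σ_{k=0}^n [n choose k]_{a,0;q} x^k y^{n-k}, where [n choose k]_{a,0;q} = [(q^{1+k}, aq^{1+k}; q)_{n-k} / (q, aq; q)_{n-k}] · q^{k(k-n)}. -/

import Mathlib

/-- The `q`-shifted factorial `(a;q)_n = ∏_{j=0}^{n-1} (1 - a q^j)`. -/
def qPoch {K : Type*} [Field K] (a q : K) (n : ℕ) : K :=
  ∏ j ∈ Finset.range n, (1 - a * q ^ j)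


section Kside
variable {K : Type*} [Field K] (q a : K)

lemma qPoch_zero (z : K) : qPoch z q 0 = 1 := Finset.prod_range_zero _

lemma qPoch_succ (z : K) (m : ℕ) : qPoch z q (m + 1) = qPoch z q m * (1 - z * q ^ m) :=
  Finset.prod_range_succ _ _

lemma qPoch_succ' (z : K) (m : ℕ) : qPoch z q (m + 1) = (1 - z) * qPoch (z * q) q m := by
  rw [qPoch, Finset.prod_range_succ', qPoch]
  simp [mul_comm, pow_succ, mul_assoc, mul_left_comm]

lemma qPoch_ne_zero (z : K) (m : ℕ) (h : ∀ j : ℕ, 1 - z * q ^ j ≠ 0) : qPoch z q m ≠ 0 :=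
  Finset.prod_ne_zero_iff.2 fun j _ => h j

lemma map_qPoch (φ : K →+* K) (hφ : φ q = q) (z : K) (m : ℕ) :
    φ (qPoch z q m) = qPoch (φ z) q m := by
  rw [qPoch, map_prod, qPoch]
  refine Finset.prod_congr rfl fun j _ => ?_
  simp [hφ]

lemma key_pascal (hq0 : q ≠ 0) (hq1 : ∀ m : ℕ, q ^ (m + 1) ≠ 1)
    (hu : ∀ i : ℕ, 1 - a * q ^ i ≠ 0) (k m : ℕ) :
    qPoch (q^(k+2)) q (m+1) * qPoch (a*q^(k+2)) q (m+1)
        / (qPoch q q (m+1) * qPoch (a*q) q (m+1))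
    = qPoch (q^(k+1)) q (m+1) * qPoch ((a*q)*q^(k+1)) q (m+1)
        / (qPoch q q (m+1) * qPoch ((a*q)*q) q (m+1)) * q^(m+1)
      + qPoch (q^(k+2)) q m * qPoch ((a*q^2)*q^(k+2)) q m
          / (qPoch q q m * qPoch ((a*q^2)*q) q m)
        * ((1 - a*q^(k+2)) * (1 - a*q^(k+3)) / ((1-a*q)*(1-a*q^2))) := by
  have hv : ∀ i : ℕ, (1:K) - q ^ (i+1) ≠ 0 := fun i => sub_ne_zero.2 (hq1 i).symm
  have hG : qPoch (q^(k+2)) q m ≠ 0 := by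
    refine qPoch_ne_zero q _ m fun j => ?_
    rw [← pow_add, show k+2+j = (k+1+j)+1 from by omega]; exact hv (k+1+j)
  have hGq : qPoch q q m ≠ 0 := by
    refine qPoch_ne_zero q _ m fun j => ?_
    rw [← pow_succ']; exact hv j
  have hH : qPoch (a*q^(k+2)) q m ≠ 0 := by
    refine qPoch_ne_zero q _ m fun j => ?_
    rw [mul_assoc, ← pow_add]; exact hu (k+2+j)
  have hHa : qPoch (a*q) q m ≠ 0 := by
    refine qPoch_ne_zero q _ m fun j => ?_
    rw [mul_assoc, ← pow_succ']; exact hu (j+1)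
  have hX7 : qPoch ((a*q)*q) q (m+1) ≠ 0 := by
    refine qPoch_ne_zero q _ (m+1) fun j => ?_
    rw [mul_assoc, mul_assoc, ← pow_succ', ← pow_succ']; exact hu (j+2)
  have hX9 : qPoch ((a*q^2)*q) q m ≠ 0 := by
    refine qPoch_ne_zero q _ m fun j => ?_
    rw [mul_assoc, mul_assoc, ← pow_succ', ← pow_add]
    rw [show 2+(j+1) = j+3 from by omega]; exact hu (j+3)
  have hX8 : qPoch ((a*q^2)*q^(k+2)) q m ≠ 0 := by
    refine qPoch_ne_zero q _ m fun j => ?_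
    rw [mul_assoc, mul_assoc, ← pow_add, ← pow_add]; exact hu (2+(k+2+j))
  have hv1 : (1:K) - q^(m+1) ≠ 0 := hv m
  have hu1 : (1:K) - a*q ≠ 0 := by simpa using hu 1
  have hu2 : (1:K) - a*q^2 ≠ 0 := hu 2
  have hum1 : (1:K) - a*q^(m+1) ≠ 0 := hu (m+1)
  have hum2 : (1:K) - a*q^(m+2) ≠ 0 := hu (m+2)
  have r1 : qPoch (q^(k+2)) q (m+1) = qPoch (q^(k+2)) q m * (1 - q^(k+2+m)) := by
    rw [qPoch_succ]; ring
  have r2 : qPoch (a*q^(k+2)) q (m+1) = qPoch (a*q^(k+2)) q m * (1 - a*q^(k+2+m)) := by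
    rw [qPoch_succ]; ring
  have r3 : qPoch q q (m+1) = qPoch q q m * (1 - q^(m+1)) := by
    rw [qPoch_succ]; ring
  have r4 : qPoch (a*q) q (m+1) = qPoch (a*q) q m * (1 - a*q^(m+1)) := by
    rw [qPoch_succ]; ring
  have r5 : qPoch (q^(k+1)) q (m+1) = (1 - q^(k+1)) * qPoch (q^(k+2)) q m := by
    rw [qPoch_succ', show q^(k+1)*q = q^(k+2) from by ring]
  have r6 : qPoch ((a*q)*q^(k+1)) q (m+1) = qPoch (a*q^(k+2)) q m * (1 - a*q^(k+2+m)) := by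
    rw [show (a*q)*q^(k+1) = a*q^(k+2) from by ring, r2]
  -- multiplied-through relations for the remaining three Pochhammers
  have p7 : (1 - a*q) * qPoch ((a*q)*q) q (m+1)
      = qPoch (a*q) q m * ((1-a*q^(m+1)) * (1-a*q^(m+2))) := by
    have h1 : qPoch (a*q) q (m+1+1)
        = qPoch (a*q) q m * ((1-a*q^(m+1)) * (1-a*q^(m+2))) := by
      rw [qPoch_succ, qPoch_succ]; ring
    rw [← h1]; exact (qPoch_succ' q (a*q) (m+1)).symm
  have p8 : ((1 - a*q^(k+2)) * (1 - a*q^(k+3))) * qPoch ((a*q^2)*q^(k+2)) q m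
      = qPoch (a*q^(k+2)) q m * ((1-a*q^(k+2+m)) * (1-a*q^(k+3+m))) := by
    have h1 : qPoch (a*q^(k+2)) q (m+1+1)
        = qPoch (a*q^(k+2)) q m * ((1-a*q^(k+2+m)) * (1-a*q^(k+3+m))) := by
      rw [qPoch_succ, qPoch_succ]; ring
    have h2 : qPoch (a*q^(k+2)) q (m+1+1)
        = (1 - a*q^(k+2)) * ((1 - a*q^(k+3)) * qPoch ((a*q^2)*q^(k+2)) q m) := by
      rw [qPoch_succ', show a*q^(k+2)*q = a*q^(k+3) from by ring, qPoch_succ',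
        show a*q^(k+3)*q = (a*q^2)*q^(k+2) from by ring]
    rw [← h1, h2]; ring
  have p9 : ((1 - a*q) * (1 - a*q^2)) * qPoch ((a*q^2)*q) q m
      = qPoch (a*q) q m * ((1-a*q^(m+1)) * (1-a*q^(m+2))) := by
    have h1 : qPoch (a*q) q (m+1+1)
        = qPoch (a*q) q m * ((1-a*q^(m+1)) * (1-a*q^(m+2))) := by
      rw [qPoch_succ, qPoch_succ]; ring
    have h2 : qPoch (a*q) q (m+1+1)
        = (1 - a*q) * ((1 - a*q^2) * qPoch ((a*q^2)*q) q m) := by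
      rw [qPoch_succ', show (a*q)*q = a*q^2 from by ring, qPoch_succ']
    rw [← h1, h2]; ring
  set G := qPoch (q^(k+2)) q m with hGdef
  set Gq := qPoch q q m with hGqdef
  set H := qPoch (a*q^(k+2)) q m with hHdef
  set Ha := qPoch (a*q) q m with hHadef
  set X7 := qPoch ((a*q)*q) q (m+1) with hX7def
  set X8 := qPoch ((a*q^2)*q^(k+2)) q m with hX8def
  set X9 := qPoch ((a*q^2)*q) q m with hX9def
  set D := Gq * Ha * ((1 - q^(m+1)) * (1-a*q^(m+1)) * (1-a*q^(m+2))) with hDdef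
  have hD : D ≠ 0 := by
    refine mul_ne_zero (mul_ne_zero hGq hHa) ?_
    exact mul_ne_zero (mul_ne_zero hv1 hum1) hum2
  have hL : qPoch (q^(k+2)) q (m+1) * qPoch (a*q^(k+2)) q (m+1)
      / (qPoch q q (m+1) * qPoch (a*q) q (m+1))
      = G * H * ((1 - q^(k+2+m)) * (1 - a*q^(k+2+m)) * (1-a*q^(m+2))) / D := by
    rw [r1, r2, r3, r4, div_eq_div_iff (by
        exact mul_ne_zero (mul_ne_zero hGq hv1) (mul_ne_zero hHa hum1)) hD]
    ring
  have hR1 : qPoch (q^(k+1)) q (m+1) * qPoch ((a*q)*q^(k+1)) q (m+1)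
      / (qPoch q q (m+1) * qPoch ((a*q)*q) q (m+1)) * q^(m+1)
      = G * H * ((1 - q^(k+1)) * (1 - a*q^(k+2+m)) * ((1-a*q) * q^(m+1))) / D := by
    rw [r5, r6, r3, div_mul_eq_mul_div,
      div_eq_div_iff (mul_ne_zero (mul_ne_zero hGq hv1) hX7) hD]
    linear_combination (-(G * H * ((1 - q^(k+1)) * (1 - a*q^(k+2+m)) * q^(m+1))
      * (Gq * (1 - q^(m+1))))) * p7
  have hR2 : G * X8 / (Gq * X9) * ((1 - a*q^(k+2)) * (1 - a*q^(k+3)) / ((1-a*q)*(1-a*q^2)))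
      = G * H * ((1 - a*q^(k+2+m)) * (1 - a*q^(k+3+m)) * (1 - q^(m+1))) / D := by
    rw [div_mul_div_comm,
      div_eq_div_iff (mul_ne_zero (mul_ne_zero hGq hX9) (mul_ne_zero hu1 hu2)) hD]
    linear_combination (G * Gq * Ha * ((1 - q^(m+1)) * (1-a*q^(m+1)) * (1-a*q^(m+2)))) * p8
      - (G * H * ((1 - a*q^(k+2+m)) * (1 - a*q^(k+3+m)) * (1 - q^(m+1))) * Gq) * p9
  rw [hL, hR1, hR2, ← add_div]
  exact congrArg (fun t => t / D) (by ring)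

end Kside

/-- coefficient in the (a;0;q)-binomial theorem -/
def auxCoef {K : Type*} [Field K] (a q : K) (n k : ℕ) : K :=
  qPoch (q ^ (k + 1)) q (n - k) * qPoch (a * q ^ (k + 1)) q (n - k) /
      (qPoch q q (n - k) * qPoch (a * q) q (n - k)) *
    q ^ ((k : ℤ) * ((k : ℤ) - (n : ℤ)))

/-- commutation scalar -/
def auxR {K : Type*} [Field K] (a q : K) (k : ℕ) : K :=
  (1 - a * q ^ (k + 1)) * (1 - a * q ^ (k + 2)) / ((1 - a * q) * (1 - a * q ^ 2)) * (q ^ k)⁻¹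

section Kside2
variable {K : Type*} [Field K] (q a : K)

lemma qPoch_q_ne_zero (hq1 : ∀ m : ℕ, q ^ (m + 1) ≠ 1) (N : ℕ) : qPoch q q N ≠ 0 := by
  refine qPoch_ne_zero q _ N fun j => ?_
  rw [← pow_succ']; exact sub_ne_zero.2 (hq1 j).symm

lemma qPoch_aq_ne_zero (hu : ∀ i : ℕ, 1 - a * q ^ i ≠ 0) (N : ℕ) : qPoch (a * q) q N ≠ 0 := by
  refine qPoch_ne_zero q _ N fun j => ?_
  rw [mul_assoc, ← pow_succ']; exact hu (j + 1)

lemma coeff_nn (N : ℕ) : auxCoef a q N N = 1 := by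
  unfold auxCoef
  rw [Nat.sub_self]
  simp [qPoch]

lemma coeff_zero (hq1 : ∀ m : ℕ, q ^ (m + 1) ≠ 1) (hu : ∀ i : ℕ, 1 - a * q ^ i ≠ 0)
    (N : ℕ) : auxCoef a q N 0 = 1 := by
  unfold auxCoef
  simp only [Nat.sub_zero, Nat.cast_zero, zero_mul, zpow_zero, mul_one, zero_add, pow_one]
  exact div_self (mul_ne_zero (qPoch_q_ne_zero q hq1 N) (qPoch_aq_ne_zero q a hu N))

lemma auxR_zero (hu : ∀ i : ℕ, 1 - a * q ^ i ≠ 0) : auxR a q 0 = 1 := by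
  unfold auxR
  have hu1 : (1:K) - a * q ≠ 0 := by simpa using hu 1
  simp only [zero_add, pow_one, pow_zero, inv_one, mul_one]
  exact div_self (mul_ne_zero hu1 (hu 2))

lemma coeff_pascal (hq0 : q ≠ 0) (hq1 : ∀ m : ℕ, q ^ (m + 1) ≠ 1)
    (hu : ∀ i : ℕ, 1 - a * q ^ i ≠ 0) (σ τ : K →+* K)
    (hσa : σ a = a * q) (hσq : σ q = q) (hτa : τ a = a * q ^ 2) (hτq : τ q = q)
    (k m : ℕ) :
    auxCoef a q (k+m+2) (k+1)
      = σ (auxCoef a q (k+m+1) k) + τ (auxCoef a q (k+m+1) (k+1)) * auxR a q (k+1) := by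
  have hkey := key_pascal q a hq0 hq1 hu k m
  unfold auxCoef auxR
  rw [show k+m+2-(k+1) = m+1 from by omega, show k+m+1-k = m+1 from by omega,
    show k+m+1-(k+1) = m from by omega]
  simp only [map_mul, map_div₀, map_pow, map_zpow₀, map_qPoch q σ hσq, map_qPoch q τ hτq,
    hσa, hσq, hτa, hτq]
  rw [show (((k+1:ℕ):ℤ) * (((k+1:ℕ):ℤ) - ((k+m+2:ℕ):ℤ))) = -(((k+1)*(m+1) : ℕ) : ℤ) from by
      push_cast; ring,
    show (((k:ℕ):ℤ) * (((k:ℕ):ℤ) - ((k+m+1:ℕ):ℤ))) = -((k*(m+1) : ℕ) : ℤ) from by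
      push_cast; ring,
    show (((k+1:ℕ):ℤ) * (((k+1:ℕ):ℤ) - ((k+m+1:ℕ):ℤ))) = -(((k+1)*m : ℕ) : ℤ) from by
      push_cast; ring,
    zpow_neg, zpow_neg, zpow_neg, zpow_natCast, zpow_natCast, zpow_natCast]
  rw [show k+1+1 = k+2 from rfl, show k+1+2 = k+3 from rfl]
  rw [hkey]
  generalize (qPoch (q^(k+1)) q (m+1) * qPoch ((a*q)*q^(k+1)) q (m+1)
      / (qPoch q q (m+1) * qPoch ((a*q)*q) q (m+1))) = t1
  generalize (qPoch (q^(k+2)) q m * qPoch ((a*q^2)*q^(k+2)) q m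
      / (qPoch q q m * qPoch ((a*q^2)*q) q m)) = t2
  generalize ((1 - a*q^(k+2)) * (1 - a*q^(k+3)) / ((1-a*q)*(1-a*q^2))) = rf
  field_simp
  ring

end Kside2

/-- The `(a;q)`-binomial theorem in `ℂ_{a,0;q}[x,y]`: with relations
`yx = [(1-aq³)/(1-aq)]q⁻¹·xy`, `x·f(a) = f(aq)·x`, `y·f(a) = f(aq²)·y`, one has
`(x+y)^n = ∑_{k=0}^n [n,k]_{a,0;q} x^k y^{n-k}` where
`[n,k]_{a,0;q} = [(q^{1+k}, aq^{1+k};q)_{n-k}/(q, aq;q)_{n-k}]·q^{k(k-n)}`. -/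
theorem stmt12 {K R : Type*} [Field K] [Ring R] (a q : K) (ι : K →+* R) (x y : R)
    (σ τ : K →+* K)
    (hσa : σ a = a * q) (hσq : σ q = q)
    (hτa : τ a = a * q ^ 2) (hτq : τ q = q)
    (hx : ∀ f : K, x * ι f = ι (σ f) * x)
    (hy : ∀ f : K, y * ι f = ι (τ f) * y)
    (hq0 : q ≠ 0) (hq1 : ∀ m : ℕ, q ^ (m + 1) ≠ 1)
    (haq : ∀ m : ℤ, 1 - a * q ^ m ≠ 0)
    (hyx : y * x = ι ((1 - a * q ^ 3) / (1 - a * q) * q⁻¹) * (x * y))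
    (n : ℕ) :
    (x + y) ^ n = ∑ k ∈ Finset.range (n + 1),
      ι (qPoch (q ^ (k + 1)) q (n - k) * qPoch (a * q ^ (k + 1)) q (n - k) /
          (qPoch q q (n - k) * qPoch (a * q) q (n - k)) *
          q ^ ((k : ℤ) * ((k : ℤ) - (n : ℤ)))) *
        x ^ k * y ^ (n - k) := by
  have hu : ∀ i : ℕ, 1 - a * q ^ i ≠ 0 := fun i => by
    have := haq (i : ℤ); rwa [zpow_natCast] at this
  have hu1 : (1:K) - a * q ≠ 0 := by simpa using hu 1
  -- commutation of y with powers of x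
  have hyxk : ∀ k : ℕ, y * x ^ k = ι (auxR a q k) * (x ^ k * y) := by
    intro k
    induction k with
    | zero => simp [auxR_zero q a hu]
    | succ k ihk =>
      have hscal : (1 - a * q ^ 3) / (1 - a * q) * q⁻¹ * σ (auxR a q k) = auxR a q (k+1) := by
        unfold auxR
        simp only [map_mul, map_div₀, map_sub, map_one, map_pow, map_inv₀, hσa, hσq]
        rw [show (1:K) - a * q * q ^ (k+1) = 1 - a * q ^ (k+2) from by ring,
          show (1:K) - a * q * q ^ (k+2) = 1 - a * q ^ (k+3) from by ring,
          show (1:K) - a * q * q = 1 - a * q ^ 2 from by ring,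
          show (1:K) - a * q * q ^ 2 = 1 - a * q ^ 3 from by ring]
        have h2 : (1:K) - a * q ^ 2 ≠ 0 := hu 2
        have h3 : (1:K) - a * q ^ 3 ≠ 0 := hu 3
        field_simp
        ring
      calc y * x ^ (k+1) = (y * x) * x ^ k := by rw [pow_succ', ← mul_assoc]
        _ = ι ((1 - a * q ^ 3) / (1 - a * q) * q⁻¹) * (x * (y * x ^ k)) := by
            rw [hyx]; simp only [mul_assoc]
        _ = ι ((1 - a * q ^ 3) / (1 - a * q) * q⁻¹) * (x * (ι (auxR a q k) * (x ^ k * y))) := by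
            rw [ihk]
        _ = ι ((1 - a * q ^ 3) / (1 - a * q) * q⁻¹) * ((x * ι (auxR a q k)) * (x ^ k * y)) := by
            simp only [mul_assoc]
        _ = ι ((1 - a * q ^ 3) / (1 - a * q) * q⁻¹) * ((ι (σ (auxR a q k)) * x) * (x ^ k * y)) := by
            rw [hx]
        _ = ι ((1 - a * q ^ 3) / (1 - a * q) * q⁻¹ * σ (auxR a q k)) * ((x * x ^ k) * y) := by
            simp only [map_mul, mul_assoc]
        _ = ι (auxR a q (k+1)) * (x ^ (k+1) * y) := by rw [hscal, ← pow_succ']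
  have main : ∀ N : ℕ, (x + y) ^ N
      = ∑ k ∈ Finset.range (N + 1), ι (auxCoef a q N k) * x ^ k * y ^ (N - k) := by
    intro N
    induction N with
    | zero => simp [auxCoef, qPoch]
    | succ n ih =>
      have hxterm : ∀ k : ℕ, x * (ι (auxCoef a q n k) * x ^ k * y ^ (n - k))
          = ι (σ (auxCoef a q n k)) * x ^ (k+1) * y ^ (n - k) := by
        intro k
        simp only [← mul_assoc, hx]
        rw [show ι (σ (auxCoef a q n k)) * x * x ^ k = ι (σ (auxCoef a q n k)) * x ^ (k+1) from by
          rw [mul_assoc, ← pow_succ']]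
      have hyterm : ∀ k : ℕ, k ≤ n → y * (ι (auxCoef a q n k) * x ^ k * y ^ (n - k))
          = ι (τ (auxCoef a q n k) * auxR a q k) * x ^ k * y ^ (n + 1 - k) := by
        intro k hk
        calc y * (ι (auxCoef a q n k) * x ^ k * y ^ (n - k))
            = (y * ι (auxCoef a q n k)) * (x ^ k * y ^ (n - k)) := by simp only [mul_assoc]
          _ = (ι (τ (auxCoef a q n k)) * y) * (x ^ k * y ^ (n - k)) := by rw [hy]
          _ = ι (τ (auxCoef a q n k)) * ((y * x ^ k) * y ^ (n - k)) := by simp only [mul_assoc]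
          _ = ι (τ (auxCoef a q n k)) * ((ι (auxR a q k) * (x ^ k * y)) * y ^ (n - k)) := by
              rw [hyxk k]
          _ = (ι (τ (auxCoef a q n k)) * ι (auxR a q k)) * (x ^ k * (y * y ^ (n - k))) := by
              simp only [mul_assoc]
          _ = ι (τ (auxCoef a q n k) * auxR a q k) * (x ^ k * y ^ (n - k + 1)) := by
              rw [← map_mul, ← pow_succ']
          _ = ι (τ (auxCoef a q n k) * auxR a q k) * x ^ k * y ^ (n + 1 - k) := by
              rw [show n - k + 1 = n + 1 - k from by omega, mul_assoc]
      have hstep : (x + y) ^ (n+1)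
          = (∑ k ∈ Finset.range (n + 1), ι (σ (auxCoef a q n k)) * x ^ (k+1) * y ^ (n - k))
            + ∑ k ∈ Finset.range (n + 1),
                ι (τ (auxCoef a q n k) * auxR a q k) * x ^ k * y ^ (n + 1 - k) := by
        rw [pow_succ', ih, add_mul, Finset.mul_sum, Finset.mul_sum]
        congr 1
        · exact Finset.sum_congr rfl fun k _ => hxterm k
        · exact Finset.sum_congr rfl fun k hk =>
            hyterm k (Nat.lt_succ_iff.mp (Finset.mem_range.mp hk))
      rw [hstep]
      -- split sums
      rw [Finset.sum_range_succ (fun k => ι (σ (auxCoef a q n k)) * x ^ (k+1) * y ^ (n - k)) n,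
        Finset.sum_range_succ'
          (fun k => ι (τ (auxCoef a q n k) * auxR a q k) * x ^ k * y ^ (n + 1 - k)) n,
        Finset.sum_range_succ' (fun k => ι (auxCoef a q (n+1) k) * x ^ k * y ^ (n + 1 - k)) (n+1),
        Finset.sum_range_succ
          (fun k => ι (auxCoef a q (n+1) (k+1)) * x ^ (k+1) * y ^ (n + 1 - (k+1))) n]
      have hmid : ∀ k ∈ Finset.range n,
          ι (auxCoef a q (n+1) (k+1)) * x ^ (k+1) * y ^ (n + 1 - (k+1))
          = ι (σ (auxCoef a q n k)) * x ^ (k+1) * y ^ (n - k)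
            + ι (τ (auxCoef a q n (k+1)) * auxR a q (k+1)) * x ^ (k+1) * y ^ (n + 1 - (k+1)) := by
        intro k hk
        obtain ⟨m, hm⟩ := Nat.exists_eq_add_of_lt (Finset.mem_range.mp hk)
        subst hm
        rw [coeff_pascal q a hq0 hq1 hu σ τ hσa hσq hτa hτq k m, map_add, add_mul, add_mul]
        congr 1
        rw [show k + m + 1 + 1 - (k+1) = k + m + 1 - k from by omega]
      rw [Finset.sum_congr rfl hmid, Finset.sum_add_distrib]
      have hlast : ι (auxCoef a q (n+1) (n+1)) * x ^ (n+1) * y ^ (n + 1 - (n+1))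
          = ι (σ (auxCoef a q n n)) * x ^ (n+1) * y ^ (n - n) := by
        simp [coeff_nn, Nat.sub_self]
      have hfirst : ι (auxCoef a q (n+1) 0) * x ^ 0 * y ^ (n + 1 - 0)
          = ι (τ (auxCoef a q n 0) * auxR a q 0) * x ^ 0 * y ^ (n + 1 - 0) := by
        simp [coeff_zero q a hq1 hu, auxR_zero q a hu]
      rw [hlast, hfirst]
      abel
  have h := main n
  unfold auxCoef at h
  exact h
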